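/- Let H = H_A ⊗ H_Ā with projection P_code = RR⁺ for an isometry R : E → H, where E = ⊗_{x} e_x is a tensor product of finite-dimensional bulk qudit spaces. Suppose complementary recovery holds (M_Ā = M_A'), and suppose for each bulk qudit x the local algebras M_a(x) = R⁺(M(x) ∩ M_A)R and M_ā(x) = R⁺(M(x) ∩ M_Ā)R, viewed inside L(e_x), satisfy bulk local complementarity M_ā(x) = M_a(x)'. Partition the bulk qudits into W[A] = {x : M_a(x) = L(e_x)}, W[Ā] = {x : M_ā(x) = L(e_x)}, and E[AĀ] the remainder. Then R⁺ M_A R = (⊗_{x∈W[A]} L(e_x)) ⊗ (⊗_{x∈E[AĀ]} M_a(x)), R⁺ M_Ā R = (⊗_{x∈E[AĀ]} M_ā(x)) ⊗ (⊗_{x∈W[Ā]} L(e_x)), and Z(R⁺ M_A R) = ⊗_{x∈E[AĀ]} Z(M_a(x)). -/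

import Mathlib

open Matrix Kronecker
open scoped Classical

noncomputable section

variable {X ιA ιB : Type*} [Fintype X] [DecidableEq X]
  {ι : X → Type*} [∀ x, Fintype (ι x)] [∀ x, DecidableEq (ι x)]
  [Fintype ιA] [Fintype ιB] [DecidableEq ιA] [DecidableEq ιB]

/-- The elementary tensor `⊗_x A x` of matrices, realized on `E = ⊗_x e_x ≅ ℂ^{∏ ι x}`. -/
def famKron (A : ∀ x, Matrix (ι x) (ι x) ℂ) : Matrix (∀ x, ι x) (∀ x, ι x) ℂ :=
  fun i j => ∏ x, A x (i x) (j x)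

/-- The operator `1 ⊗ ⋯ ⊗ O ⊗ ⋯ ⊗ 1` acting only on the bulk qudit `x`. -/
def onlyAt (x : X) (O : Matrix (ι x) (ι x) ℂ) : Matrix (∀ y, ι y) (∀ y, ι y) ℂ :=
  famKron (Function.update (fun y => (1 : Matrix (ι y) (ι y) ℂ)) x O)

/-- The tensor-product von Neumann algebra `⊗_x N x`, generated by the elementary tensors
with `A x ∈ N x`. -/
def tensorVNA (N : ∀ x, Set (Matrix (ι x) (ι x) ℂ)) :
    Set (Matrix (∀ x, ι x) (∀ x, ι x) ℂ) :=
  (StarAlgebra.adjoin ℂ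
    {M | ∃ A : ∀ x, Matrix (ι x) (ι x) ℂ, (∀ x, A x ∈ N x) ∧ M = famKron A} :
    StarSubalgebra ℂ (Matrix (∀ x, ι x) (∀ x, ι x) ℂ))

/-- The trivial algebra `ℂ·1 ⊆ L(e_x)` (a suppressed tensor factor). -/
def scalars (n : Type*) [Fintype n] [DecidableEq n] : Set (Matrix n n ℂ) :=
  Set.range fun c : ℂ => c • (1 : Matrix n n ℂ)

/-- The algebra `M_A` of logical operators reconstructible on `A`. -/
def MA (P : Matrix (ιA × ιB) (ιA × ιB) ℂ) : Set (Matrix (ιA × ιB) (ιA × ιB) ℂ) :=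
  {B | ∃ OA : Matrix ιA ιA ℂ,
    Commute (OA ⊗ₖ (1 : Matrix ιB ιB ℂ)) P ∧ B = P * (OA ⊗ₖ (1 : Matrix ιB ιB ℂ)) * P}

/-- The algebra `M_Ā` of logical operators reconstructible on `Ā`. -/
def MB (P : Matrix (ιA × ιB) (ιA × ιB) ℂ) : Set (Matrix (ιA × ιB) (ιA × ιB) ℂ) :=
  {B | ∃ OB : Matrix ιB ιB ℂ,
    Commute ((1 : Matrix ιA ιA ℂ) ⊗ₖ OB) P ∧ B = P * ((1 : Matrix ιA ιA ℂ) ⊗ₖ OB) * P}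

/-- The commutant of `M` within `L(H_code) = {B : B = P B P}`. -/
def cornerCommutant {n : Type*} [Fintype n]
    (P : Matrix n n ℂ) (M : Set (Matrix n n ℂ)) : Set (Matrix n n ℂ) :=
  {C | C = P * C * P ∧ ∀ B ∈ M, B * C = C * B}

/-- The pullback `R⁺ S R ⊆ L(E)` of a set of operators on `H = H_A ⊗ H_Ā`. -/
def pullback (R : Matrix (ιA × ιB) (∀ x, ι x) ℂ)
    (S : Set (Matrix (ιA × ιB) (ιA × ιB) ℂ)) : Set (Matrix (∀ x, ι x) (∀ x, ι x) ℂ) :=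
  (fun B => Rᴴ * B * R) '' S

/-- The local algebra `M_a(x) = R⁺(M(x) ∩ M_A)R` viewed inside `L(e_x)`:
those `O` with `R (1 ⊗ ⋯ ⊗ O ⊗ ⋯ ⊗ 1) R⁺ ∈ M_A`. -/
def MlocA (R : Matrix (ιA × ιB) (∀ x, ι x) ℂ) (x : X) : Set (Matrix (ι x) (ι x) ℂ) :=
  {O | R * onlyAt x O * Rᴴ ∈ MA (R * Rᴴ)}

/-- The local algebra `M_ā(x) = R⁺(M(x) ∩ M_Ā)R` viewed inside `L(e_x)`. -/
def MlocB (R : Matrix (ιA × ιB) (∀ x, ι x) ℂ) (x : X) : Set (Matrix (ι x) (ι x) ℂ) :=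
  {O | R * onlyAt x O * Rᴴ ∈ MB (R * Rᴴ)}


namespace SubregionAux


/-- centralizer of span equals centralizer of the set. -/
lemma centralizer_span {A : Type*} [Ring A] [Algebra ℂ A] (S : Set A) :
    Set.centralizer ((Submodule.span ℂ S : Submodule ℂ A) : Set A) = Set.centralizer S := by
  apply Set.Subset.antisymm
  · exact Set.centralizer_subset Submodule.subset_span
  · intro c hc
    rw [Set.mem_centralizer_iff]
    intro m hm
    rw [SetLike.mem_coe] at hm
    induction hm using Submodule.span_induction with
    | mem z hz => exact hc z hz
    | zero => simp
    | add u v _ _ hu hv => rw [add_mul, mul_add, hu, hv]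
    | smul r u _ hu => rw [smul_mul_assoc, mul_smul_comm, hu]

section DCT

variable {m : Type*} [Fintype m] [DecidableEq m]

lemma toEuclideanLin_mul (A B : Matrix m m ℂ) (v : EuclideanSpace ℂ m) :
    Matrix.toEuclideanLin (A * B) v = Matrix.toEuclideanLin A (Matrix.toEuclideanLin B v) := by
  simp [Matrix.toEuclideanLin_apply, Matrix.mulVec_mulVec]

/-- Step 1 of the double commutant theorem: a double-commutant element maps each
vector into the orbit of the algebra. -/
lemma dct_vec (W : Submodule ℂ (Matrix m m ℂ))
    (h1 : (1 : Matrix m m ℂ) ∈ W)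
    (hmul : ∀ a ∈ W, ∀ b ∈ W, a * b ∈ W)
    (hstar : ∀ a ∈ W, aᴴ ∈ W)
    (T : Matrix m m ℂ)
    (hT : T ∈ Set.centralizer (Set.centralizer (W : Set (Matrix m m ℂ))))
    (v : EuclideanSpace ℂ m) :
    ∃ a ∈ W, Matrix.toEuclideanLin T v = Matrix.toEuclideanLin a v := by
  -- the orbit subspace
  set ev : Matrix m m ℂ →ₗ[ℂ] EuclideanSpace ℂ m :=
    { toFun := fun a => Matrix.toEuclideanLin a v
      map_add' := by intro a b; simp
      map_smul' := by intro c a; simp } with hev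
  set V : Submodule ℂ (EuclideanSpace ℂ m) := W.map ev with hV
  have hVmem : ∀ a ∈ W, Matrix.toEuclideanLin a v ∈ V := fun a ha =>
    ⟨a, ha, rfl⟩
  -- invariance of V
  have hinv : ∀ a ∈ W, ∀ u ∈ V, Matrix.toEuclideanLin a u ∈ V := by
    rintro a ha u ⟨b, hb, rfl⟩
    refine ⟨a * b, hmul a ha b hb, ?_⟩
    show Matrix.toEuclideanLin (a*b) v = _
    rw [toEuclideanLin_mul]
    rfl
  -- the projection operator
  haveI : CompleteSpace V := FiniteDimensional.complete ℂ V
  set pL : EuclideanSpace ℂ m →ₗ[ℂ] EuclideanSpace ℂ m :=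
    ((V.subtypeL ∘L V.orthogonalProjection : EuclideanSpace ℂ m →L[ℂ] EuclideanSpace ℂ m) :
      EuclideanSpace ℂ m →ₗ[ℂ] EuclideanSpace ℂ m) with hpL
  have hpmem : ∀ u, pL u ∈ V := fun u => (V.orthogonalProjection u).2
  have hpfix : ∀ u ∈ V, pL u = u := fun u hu => V.starProjection_eq_self_iff.mpr hu
  have hpsa : LinearMap.adjoint pL = pL := by
    have hsym : pL.IsSymmetric := V.starProjection_isSymmetric
    exact ((LinearMap.isSymmetric_iff_isSelfAdjoint pL).mp hsym)
  -- half-commutation : a ∘ pL = pL ∘ a ∘ pL for a ∈ W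
  have hhalf : ∀ a ∈ W, (Matrix.toEuclideanLin a).comp pL
      = pL.comp ((Matrix.toEuclideanLin a).comp pL) := by
    intro a ha
    refine LinearMap.ext fun u => ?_
    show Matrix.toEuclideanLin a (pL u) = pL (Matrix.toEuclideanLin a (pL u))
    exact (hpfix _ (hinv a ha _ (hpmem u))).symm
  -- full commutation
  have hcomm : ∀ a ∈ W, (Matrix.toEuclideanLin a).comp pL
      = pL.comp (Matrix.toEuclideanLin a) := by
    intro a ha
    have h2 := hhalf aᴴ (hstar a ha)
    have h3 := congrArg LinearMap.adjoint h2
    rw [LinearMap.adjoint_comp, LinearMap.adjoint_comp, LinearMap.adjoint_comp, hpsa,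
      ← Matrix.toEuclideanLin_conjTranspose_eq_adjoint, conjTranspose_conjTranspose] at h3
    -- h3 : pL ∘ a = (pL ∘ a) ∘ pL  (check shape)
    rw [hhalf a ha]
    rw [h3]
    rfl
  -- the matrix of pL and its membership in the centralizer
  set pM : Matrix m m ℂ := Matrix.toEuclideanLin.symm pL with hpM
  have hpMApp : ∀ u, Matrix.toEuclideanLin pM u = pL u := by
    intro u; rw [hpM, LinearEquiv.apply_symm_apply]
  have hpMc : pM ∈ Set.centralizer (W : Set (Matrix m m ℂ)) := by
    rw [Set.mem_centralizer_iff]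
    intro a ha
    apply Matrix.toEuclideanLin.injective
    refine LinearMap.ext fun u => ?_
    show Matrix.toEuclideanLin (a * pM) u = Matrix.toEuclideanLin (pM * a) u
    rw [toEuclideanLin_mul, toEuclideanLin_mul, hpMApp, hpMApp]
    have := congrFun (congrArg DFunLike.coe (hcomm a ha)) u
    simpa using this
  -- conclude
  have hTv : Matrix.toEuclideanLin T v ∈ V := by
    have hv : v ∈ V := by
      have h1v : Matrix.toEuclideanLin (1 : Matrix m m ℂ) v = v := by
        simp [Matrix.toEuclideanLin_apply]
      have := hVmem 1 h1
      rwa [h1v] at this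
    have hTp := hT pM hpMc
    have : Matrix.toEuclideanLin T v = pL (Matrix.toEuclideanLin T v) := by
      have h1' : Matrix.toEuclideanLin (pM * T) v = Matrix.toEuclideanLin (T * pM) v := by
        rw [hTp]
      rw [toEuclideanLin_mul, toEuclideanLin_mul, hpMApp, hpMApp, hpfix v hv] at h1'
      exact h1'.symm
    rw [this]; exact hpmem _
  obtain ⟨a, ha, hav⟩ := hTv
  exact ⟨a, ha, hav.symm⟩


lemma kron_one_conjTranspose {n : Type*} [Fintype n] [DecidableEq n] (a : Matrix m m ℂ) :
    (a ⊗ₖ (1 : Matrix n n ℂ))ᴴ = aᴴ ⊗ₖ (1 : Matrix n n ℂ) := by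
  ext ⟨i,k⟩ ⟨j,l⟩
  simp only [conjTranspose_apply, kroneckerMap_apply, one_apply, star_mul']
  by_cases h : l = k
  · subst h; simp [mul_comm]
  · rw [if_neg h, if_neg fun hh => h hh.symm]
    simp

lemma kron_mul_apply (a : Matrix m m ℂ) (C : Matrix (m × m) (m × m) ℂ) (i k j l : m) :
    ((a ⊗ₖ (1 : Matrix m m ℂ)) * C) (i,k) (j,l) = ∑ p, a i p * C (p,k) (j,l) := by
  rw [Matrix.mul_apply, Fintype.sum_prod_type]
  simp [Matrix.one_apply, mul_ite, ite_mul, Finset.sum_ite_eq]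

lemma mul_kron_apply (a : Matrix m m ℂ) (C : Matrix (m × m) (m × m) ℂ) (i k j l : m) :
    (C * (a ⊗ₖ (1 : Matrix m m ℂ))) (i,k) (j,l) = ∑ p, C (i,k) (p,l) * a p j := by
  rw [Matrix.mul_apply, Fintype.sum_prod_type]
  rw [Finset.sum_comm]
  simp only [kroneckerMap_apply, Matrix.one_apply]
  simp [mul_ite, ite_mul, Finset.sum_ite_eq', mul_comm]

/-- The finite-dimensional double commutant theorem for matrix algebras. -/
theorem dct (W : Submodule ℂ (Matrix m m ℂ))
    (h1 : (1 : Matrix m m ℂ) ∈ W)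
    (hmul : ∀ a ∈ W, ∀ b ∈ W, a * b ∈ W)
    (hstar : ∀ a ∈ W, aᴴ ∈ W) :
    Set.centralizer (Set.centralizer (W : Set (Matrix m m ℂ))) ⊆ (W : Set (Matrix m m ℂ)) := by
  intro T hT
  set krL : Matrix m m ℂ →ₗ[ℂ] Matrix (m × m) (m × m) ℂ :=
    { toFun := fun a => a ⊗ₖ (1 : Matrix m m ℂ)
      map_add' := fun a b => Matrix.add_kronecker a b 1
      map_smul' := fun c a => Matrix.smul_kronecker c a 1 } with hkrL
  set W2 : Submodule ℂ (Matrix (m × m) (m × m) ℂ) := W.map krL with hW2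
  have hmem2 : ∀ a ∈ W, a ⊗ₖ (1 : Matrix m m ℂ) ∈ W2 := fun a ha => ⟨a, ha, rfl⟩
  have h12 : (1 : Matrix (m × m) (m × m) ℂ) ∈ W2 := by
    refine ⟨1, h1, ?_⟩
    show (1 : Matrix m m ℂ) ⊗ₖ (1 : Matrix m m ℂ) = 1
    exact Matrix.one_kronecker_one
  have hmul2 : ∀ a ∈ W2, ∀ b ∈ W2, a * b ∈ W2 := by
    rintro _ ⟨a, ha, rfl⟩ _ ⟨b, hb, rfl⟩
    refine ⟨a * b, hmul a ha b hb, ?_⟩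
    show (a * b) ⊗ₖ ((1 : Matrix m m ℂ)) = (a ⊗ₖ (1 : Matrix m m ℂ)) * (b ⊗ₖ (1 : Matrix m m ℂ))
    rw [← Matrix.mul_kronecker_mul, one_mul]
  have hstar2 : ∀ a ∈ W2, aᴴ ∈ W2 := by
    rintro _ ⟨a, ha, rfl⟩
    refine ⟨aᴴ, hstar a ha, ?_⟩
    show aᴴ ⊗ₖ ((1 : Matrix m m ℂ)) = (a ⊗ₖ (1 : Matrix m m ℂ))ᴴ
    rw [kron_one_conjTranspose]
  -- T ⊗ 1 is in the double centralizer of W2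
  have hT2 : T ⊗ₖ (1 : Matrix m m ℂ) ∈
      Set.centralizer (Set.centralizer (W2 : Set (Matrix (m × m) (m × m) ℂ))) := by
    intro C hC
    have hD : ∀ k l, (Matrix.of fun i j => C (i,k) (j,l)) ∈
        Set.centralizer (W : Set (Matrix m m ℂ)) := by
      intro k l
      intro a ha
      have hkr := hC (a ⊗ₖ (1 : Matrix m m ℂ)) (hmem2 a ha)
      ext i j
      have h1' := congrFun (congrFun hkr (i,k)) (j,l)
      rw [kron_mul_apply, mul_kron_apply] at h1'
      rw [Matrix.mul_apply, Matrix.mul_apply]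
      simpa using h1'
    ext ⟨i,k⟩ ⟨j,l⟩
    rw [kron_mul_apply, mul_kron_apply]
    have hcT := hT (Matrix.of fun i j => C (i,k) (j,l)) (hD k l)
    have := congrFun (congrFun hcT i) j
    rw [Matrix.mul_apply, Matrix.mul_apply] at this
    simpa using this
  -- apply the one-vector lemma with the maximally entangled vector
  set ω : (m × m) → ℂ := fun p => if p.1 = p.2 then 1 else 0 with hω
  obtain ⟨a2, ha2, hEq⟩ := dct_vec W2 h12 hmul2 hstar2 (T ⊗ₖ (1 : Matrix m m ℂ)) hT2
    ((WithLp.equiv 2 ((m × m) → ℂ)).symm ω)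
  obtain ⟨a, ha, rfl⟩ := ha2
  have hmv : (T ⊗ₖ (1 : Matrix m m ℂ)) *ᵥ ω = (a ⊗ₖ (1 : Matrix m m ℂ)) *ᵥ ω := by
    have := congrArg (WithLp.equiv 2 ((m × m) → ℂ)) hEq
    simp at this; exact this
  have hTa : T = a := by
    ext i k
    have := congrFun hmv (i, k)
    rw [Matrix.mulVec, Matrix.mulVec] at this
    simp only [dotProduct, Fintype.sum_prod_type, kroneckerMap_apply, Matrix.one_apply,
      hω, mul_ite, mul_one, mul_zero, ite_mul, zero_mul, Finset.sum_ite_eq', Finset.mem_univ,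
      if_true] at this
    simpa using this
  rw [hTa]; exact ha

end DCT


section Kron

set_option linter.unusedSectionVars false

variable {X : Type*} [Fintype X] [DecidableEq X]
  {ι : X → Type*} [∀ x, Fintype (ι x)] [∀ x, DecidableEq (ι x)]

lemma famKron_mul (A B : ∀ x, Matrix (ι x) (ι x) ℂ) :
    famKron A * famKron B = famKron (fun x => A x * B x) := by
  ext c d
  rw [Matrix.mul_apply]
  show ∑ e : ∀ x, ι x, (∏ x, A x (c x) (e x)) * ∏ x, B x (e x) (d x)
      = ∏ x, (A x * B x) (c x) (d x)
  have key := Finset.prod_univ_sum (fun x => (Finset.univ : Finset (ι x)))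
    (fun x j => A x (c x) j * B x j (d x))
  rw [Fintype.piFinset_univ] at key
  calc ∑ e : ∀ x, ι x, (∏ x, A x (c x) (e x)) * ∏ x, B x (e x) (d x)
      = ∑ e : ∀ x, ι x, ∏ x, (A x (c x) (e x) * B x (e x) (d x)) := by
        refine Finset.sum_congr rfl fun e _ => ?_
        rw [Finset.prod_mul_distrib]
    _ = ∏ x, ∑ j, A x (c x) j * B x j (d x) := key.symm
    _ = ∏ x, (A x * B x) (c x) (d x) := by
        refine Finset.prod_congr rfl fun x _ => ?_
        rw [Matrix.mul_apply]

lemma famKron_one : famKron (fun x => (1 : Matrix (ι x) (ι x) ℂ)) = 1 := by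
  ext c d
  show (∏ x, (1 : Matrix (ι x) (ι x) ℂ) (c x) (d x)) = (1 : Matrix (∀ x, ι x) (∀ x, ι x) ℂ) c d
  simp only [Matrix.one_apply]
  rw [Finset.prod_boole]
  by_cases h : c = d
  · subst h; simp
  · rw [if_neg h, if_neg]
    intro hall
    exact h (funext fun x => hall x (Finset.mem_univ x))

lemma famKron_conjTranspose (A : ∀ x, Matrix (ι x) (ι x) ℂ) :
    (famKron A)ᴴ = famKron (fun x => (A x)ᴴ) := by
  ext c d
  show star (∏ x, A x (d x) (c x)) = ∏ x, (A x)ᴴ (c x) (d x)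
  rw [star_prod]
  rfl

lemma famKron_update_apply (A : ∀ x, Matrix (ι x) (ι x) ℂ) (x : X)
    (O : Matrix (ι x) (ι x) ℂ) (c d : ∀ y, ι y) :
    famKron (Function.update A x O) c d
      = O (c x) (d x) * ∏ y ∈ Finset.univ.erase x, A y (c y) (d y) := by
  show (∏ y, (Function.update A x O) y (c y) (d y)) = _
  rw [← Finset.mul_prod_erase Finset.univ _ (Finset.mem_univ x)]
  congr 1
  · rw [Function.update_self]
  · refine Finset.prod_congr rfl fun y hy => ?_
    rw [Function.update_of_ne (Finset.ne_of_mem_erase hy)]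

lemma famKron_stdBasisMatrix (a b : ∀ x, ι x) :
    famKron (fun x => Matrix.single (a x) (b x) (1:ℂ)) = Matrix.single a b 1 := by
  ext c d
  show (∏ x, Matrix.single (a x) (b x) (1:ℂ) (c x) (d x)) = _
  simp only [Matrix.single, Matrix.of_apply]
  rw [Finset.prod_boole]
  by_cases h : a = c ∧ b = d
  · rw [if_pos, if_pos h]
    intro x _
    exact ⟨congrFun h.1 x, congrFun h.2 x⟩
  · rw [if_neg, if_neg h]
    intro hall
    exact h ⟨funext fun x => (hall x (Finset.mem_univ x)).1,
      funext fun x => (hall x (Finset.mem_univ x)).2⟩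

lemma onlyAt_apply (x : X) (O : Matrix (ι x) (ι x) ℂ) (c d : ∀ y, ι y) :
    onlyAt x O c d = O (c x) (d x) *
      (if ∀ y ∈ Finset.univ.erase x, c y = d y then 1 else 0) := by
  rw [onlyAt, famKron_update_apply]
  congr 1
  simp only [Matrix.one_apply]
  rw [Finset.prod_boole]
  congr

lemma update_cond_iff {x : X} {c d : ∀ y, ι y} :
    (∀ y ∈ Finset.univ.erase x, c y = d y) ↔ c = Function.update d x (c x) := by
  constructor
  · intro h
    funext y
    by_cases hy : y = x
    · subst hy; rw [Function.update_self]
    · rw [Function.update_of_ne hy]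
      exact h y (Finset.mem_erase.mpr ⟨hy, Finset.mem_univ y⟩)
  · intro h y hy
    have hyx := (Finset.mem_erase.mp hy).1
    calc c y = Function.update d x (c x) y := by rw [← h]
    _ = d y := Function.update_of_ne hyx _ _

lemma sum_update_reindex (x : X) (d : ∀ y, ι y) (g : (∀ y, ι y) → ℂ) :
    (∑ e : ∀ y, ι y, if e = Function.update d x (e x) then g e else 0)
      = ∑ k, g (Function.update d x k) := by
  have step1 : ∀ e : ∀ y, ι y,
      (if e = Function.update d x (e x) then g e else 0)
        = ∑ k, if e = Function.update d x k then g e else 0 := by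
    intro e
    rw [Finset.sum_eq_single (e x)]
    · intro k _ hk
      rw [if_neg]
      intro he
      exact hk ((congrFun he x).trans (Function.update_self x k d)).symm
    · intro h; exact absurd (Finset.mem_univ _) h
  calc (∑ e : ∀ y, ι y, if e = Function.update d x (e x) then g e else 0)
      = ∑ e : ∀ y, ι y, ∑ k, if e = Function.update d x k then g e else 0 :=
        Finset.sum_congr rfl fun e _ => step1 e
    _ = ∑ k, ∑ e : ∀ y, ι y, if e = Function.update d x k then g e else 0 :=
        Finset.sum_comm
    _ = ∑ k, g (Function.update d x k) := by
        refine Finset.sum_congr rfl fun k _ => ?_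
        rw [Finset.sum_ite_eq' Finset.univ (Function.update d x k)
          (fun e => g e)]
        rw [if_pos (Finset.mem_univ _)]

end Kron

section Kron2

set_option linter.unusedSectionVars false

variable {X : Type*} [Fintype X] [DecidableEq X]
  {ι : X → Type*} [∀ x, Fintype (ι x)] [∀ x, DecidableEq (ι x)]

/-- The block of a big matrix at slot `x`, with off-`x` row pattern `a` and
column pattern `b`. -/
def blockAt (x : X) (T : Matrix (∀ y, ι y) (∀ y, ι y) ℂ) (a b : ∀ y, ι y) :
    Matrix (ι x) (ι x) ℂ :=
  Matrix.of fun i j => T (Function.update a x i) (Function.update b x j)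

lemma blockAt_add (x : X) (T S : Matrix (∀ y, ι y) (∀ y, ι y) ℂ) (a b : ∀ y, ι y) :
    blockAt x (T + S) a b = blockAt x T a b + blockAt x S a b := rfl

lemma blockAt_smul (x : X) (c : ℂ) (T : Matrix (∀ y, ι y) (∀ y, ι y) ℂ) (a b : ∀ y, ι y) :
    blockAt x (c • T) a b = c • blockAt x T a b := rfl

lemma blockAt_apply_self (x : X) (T : Matrix (∀ y, ι y) (∀ y, ι y) ℂ) (a b : ∀ y, ι y) :
    blockAt x T a b (a x) (b x) = T a b := by
  show T (Function.update a x (a x)) (Function.update b x (b x)) = T a b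
  rw [Function.update_eq_self, Function.update_eq_self]

lemma blockAt_famKron (x : X) (A : ∀ y, Matrix (ι y) (ι y) ℂ) (a b : ∀ y, ι y) :
    blockAt x (famKron A) a b = (∏ y ∈ Finset.univ.erase x, A y (a y) (b y)) • A x := by
  ext i j
  show famKron A (Function.update a x i) (Function.update b x j) = _
  show (∏ y, A y (Function.update a x i y) (Function.update b x j y)) = _
  rw [← Finset.mul_prod_erase Finset.univ _ (Finset.mem_univ x)]
  rw [Function.update_self, Function.update_self]
  rw [Matrix.smul_apply, smul_eq_mul, mul_comm]
  congr 1
  refine Finset.prod_congr rfl fun y hy => ?_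
  have hyx := Finset.ne_of_mem_erase hy
  rw [Function.update_of_ne hyx, Function.update_of_ne hyx]

lemma mul_onlyAt_apply (x : X) (O : Matrix (ι x) (ι x) ℂ)
    (T : Matrix (∀ y, ι y) (∀ y, ι y) ℂ) (c d : ∀ y, ι y) :
    (T * onlyAt x O) c d = ∑ k, T c (Function.update d x k) * O k (d x) := by
  rw [Matrix.mul_apply]
  calc (∑ e : ∀ y, ι y, T c e * onlyAt x O e d)
      = ∑ e : ∀ y, ι y, (if e = Function.update d x (e x)
          then T c e * O (e x) (d x) else 0) := by
        refine Finset.sum_congr rfl fun e _ => ?_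
        rw [onlyAt_apply]
        by_cases h : ∀ y ∈ Finset.univ.erase x, e y = d y
        · rw [if_pos h, if_pos (update_cond_iff.mp h), mul_one]
        · rw [if_neg h, if_neg (fun hc => h (update_cond_iff.mpr hc))]
          rw [mul_zero, mul_zero]
    _ = ∑ k, T c (Function.update d x k) * O k (d x) := by
        rw [sum_update_reindex x d (fun e => T c e * O (e x) (d x))]
        refine Finset.sum_congr rfl fun k _ => ?_
        rw [Function.update_self]

lemma onlyAt_mul_apply (x : X) (O : Matrix (ι x) (ι x) ℂ)
    (T : Matrix (∀ y, ι y) (∀ y, ι y) ℂ) (c d : ∀ y, ι y) :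
    (onlyAt x O * T) c d = ∑ k, O (c x) k * T (Function.update c x k) d := by
  rw [Matrix.mul_apply]
  calc (∑ e : ∀ y, ι y, onlyAt x O c e * T e d)
      = ∑ e : ∀ y, ι y, (if e = Function.update c x (e x)
          then O (c x) (e x) * T e d else 0) := by
        refine Finset.sum_congr rfl fun e _ => ?_
        rw [onlyAt_apply]
        have hsymm : (∀ y ∈ Finset.univ.erase x, c y = e y)
            ↔ (∀ y ∈ Finset.univ.erase x, e y = c y) := by
          constructor <;> exact fun h y hy => (h y hy).symm
        by_cases h : ∀ y ∈ Finset.univ.erase x, e y = c y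
        · rw [if_pos (hsymm.mpr h), if_pos (update_cond_iff.mp h), mul_one]
        · rw [if_neg (fun hc => h (hsymm.mp hc)),
            if_neg (fun hc => h (update_cond_iff.mpr hc))]
          rw [mul_zero, zero_mul]
    _ = ∑ k, O (c x) k * T (Function.update c x k) d := by
        rw [sum_update_reindex x c (fun e => O (c x) (e x) * T e d)]
        refine Finset.sum_congr rfl fun k _ => ?_
        rw [Function.update_self]

lemma commute_onlyAt_iff (x : X) (O : Matrix (ι x) (ι x) ℂ)
    (T : Matrix (∀ y, ι y) (∀ y, ι y) ℂ) :
    T * onlyAt x O = onlyAt x O * T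
      ↔ ∀ a b, blockAt x T a b * O = O * blockAt x T a b := by
  constructor
  · intro h a b
    ext i j
    have := congrFun (congrFun h (Function.update a x i)) (Function.update b x j)
    rw [mul_onlyAt_apply, onlyAt_mul_apply] at this
    rw [Matrix.mul_apply, Matrix.mul_apply]
    simp only [Function.update_idem, Function.update_self] at this
    convert this using 2 <;> rfl
  · intro h
    ext c d
    rw [mul_onlyAt_apply, onlyAt_mul_apply]
    have := congrFun (congrFun (h c d) (c x)) (d x)
    rw [Matrix.mul_apply, Matrix.mul_apply] at this
    simpa [blockAt, Function.update_eq_self] using this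

end Kron2

section Kron3

set_option linter.unusedSectionVars false

variable {X : Type*} [Fintype X] [DecidableEq X]
  {ι : X → Type*} [∀ x, Fintype (ι x)] [∀ x, DecidableEq (ι x)]

/-- The set of elementary tensors with slots in the given sets. -/
def kronSet (S : ∀ x, Set (Matrix (ι x) (ι x) ℂ)) :
    Set (Matrix (∀ x, ι x) (∀ x, ι x) ℂ) :=
  {M | ∃ A : ∀ x, Matrix (ι x) (ι x) ℂ, (∀ x, A x ∈ S x) ∧ M = famKron A}

lemma onlyAt_mem_kronSet {S : ∀ x, Set (Matrix (ι x) (ι x) ℂ)}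
    (h1 : ∀ x, (1 : Matrix (ι x) (ι x) ℂ) ∈ S x) {x : X} {O : Matrix (ι x) (ι x) ℂ}
    (hO : O ∈ S x) : onlyAt x O ∈ kronSet S := by
  refine ⟨Function.update (fun y => (1 : Matrix (ι y) (ι y) ℂ)) x O, fun y => ?_, rfl⟩
  by_cases hy : y = x
  · subst hy; rw [Function.update_self]; exact hO
  · rw [Function.update_of_ne hy]; exact h1 y

/-- The subspace of big matrices all of whose `x`-blocks lie in `W x`. -/
def blockMod (W : ∀ x, Submodule ℂ (Matrix (ι x) (ι x) ℂ)) :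
    Submodule ℂ (Matrix (∀ x, ι x) (∀ x, ι x) ℂ) where
  carrier := {T | ∀ x a b, blockAt x T a b ∈ W x}
  add_mem' := fun hT hS x a b => by
    rw [blockAt_add]; exact (W x).add_mem (hT x a b) (hS x a b)
  zero_mem' := fun x a b => by
    have : blockAt (ι := ι) x 0 a b = 0 := rfl
    rw [this]; exact (W x).zero_mem
  smul_mem' := fun c T hT x a b => by
    rw [blockAt_smul]; exact (W x).smul_mem c (hT x a b)

lemma kronSet_subset_blockMod (W : ∀ x, Submodule ℂ (Matrix (ι x) (ι x) ℂ)) :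
    kronSet (fun x => (W x : Set (Matrix (ι x) (ι x) ℂ))) ⊆ (blockMod W : Set _) := by
  rintro _ ⟨A, hA, rfl⟩
  intro x a b
  rw [blockAt_famKron]
  exact (W x).smul_mem _ (hA x)

/-- choice of a linear projection onto each `W x` -/
def projOf (W : ∀ x, Submodule ℂ (Matrix (ι x) (ι x) ℂ)) (x : X) :
    Matrix (ι x) (ι x) ℂ →ₗ[ℂ] Matrix (ι x) (ι x) ℂ :=
  (W x).subtype.comp
    (Submodule.linearProjOfIsCompl (W x) (W x).exists_isCompl.choose
      (W x).exists_isCompl.choose_spec)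

lemma projOf_mem (W : ∀ x, Submodule ℂ (Matrix (ι x) (ι x) ℂ)) (x : X)
    (M : Matrix (ι x) (ι x) ℂ) : projOf W x M ∈ W x :=
  ((Submodule.linearProjOfIsCompl (W x) _ (W x).exists_isCompl.choose_spec) M).2

lemma projOf_fix (W : ∀ x, Submodule ℂ (Matrix (ι x) (ι x) ℂ)) (x : X)
    {M : Matrix (ι x) (ι x) ℂ} (hM : M ∈ W x) : projOf W x M = M := by
  have := Submodule.linearProjOfIsCompl_apply_left
    ((W x).exists_isCompl.choose_spec) ⟨M, hM⟩
  show ((Submodule.linearProjOfIsCompl (W x) _ (W x).exists_isCompl.choose_spec) M : _) = M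
  exact congrArg Subtype.val this

/-- The slotwise projection at slot `x` as an endomorphism of big matrices. -/
def stepAt (W : ∀ x, Submodule ℂ (Matrix (ι x) (ι x) ℂ)) (x : X) :
    Module.End ℂ (Matrix (∀ y, ι y) (∀ y, ι y) ℂ) where
  toFun := fun T => Matrix.of fun a b => projOf W x (blockAt x T a b) (a x) (b x)
  map_add' := fun T S => by
    ext a b
    show projOf W x (blockAt x (T + S) a b) (a x) (b x) = _
    rw [blockAt_add, map_add]
    rfl
  map_smul' := fun c T => by
    ext a b
    show projOf W x (blockAt x (c • T) a b) (a x) (b x) = _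
    rw [blockAt_smul, _root_.map_smul]
    rfl

lemma stepAt_fix (W : ∀ x, Submodule ℂ (Matrix (ι x) (ι x) ℂ)) (x : X)
    {T : Matrix (∀ y, ι y) (∀ y, ι y) ℂ} (hT : ∀ a b, blockAt x T a b ∈ W x) :
    stepAt W x T = T := by
  ext a b
  show projOf W x (blockAt x T a b) (a x) (b x) = T a b
  rw [projOf_fix W x (hT a b), blockAt_apply_self]

lemma stepAt_famKron (W : ∀ x, Submodule ℂ (Matrix (ι x) (ι x) ℂ)) (x : X)
    (A : ∀ y, Matrix (ι y) (ι y) ℂ) :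
    stepAt W x (famKron A) = famKron (Function.update A x (projOf W x (A x))) := by
  ext a b
  show projOf W x (blockAt x (famKron A) a b) (a x) (b x) = _
  rw [blockAt_famKron, _root_.map_smul, famKron_update_apply]
  rw [Matrix.smul_apply, smul_eq_mul, mul_comm]

/-- Iterated slotwise projection over a list of slots. -/
lemma stepList_fix (W : ∀ x, Submodule ℂ (Matrix (ι x) (ι x) ℂ)) (l : List X)
    {T : Matrix (∀ y, ι y) (∀ y, ι y) ℂ} (hT : ∀ x a b, blockAt x T a b ∈ W x) :
    ((l.map (stepAt W)).prod) T = T := by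
  induction l with
  | nil => simp
  | cons x l ih =>
    rw [List.map_cons, List.prod_cons, Module.End.mul_apply, ih]
    exact stepAt_fix W x (hT x)

lemma stepList_famKron (W : ∀ x, Submodule ℂ (Matrix (ι x) (ι x) ℂ)) (l : List X)
    (hl : l.Nodup) (A : ∀ y, Matrix (ι y) (ι y) ℂ) :
    ((l.map (stepAt W)).prod) (famKron A)
      = famKron (fun y => if y ∈ l then projOf W y (A y) else A y) := by
  induction l with
  | nil => simp
  | cons x l ih =>
    have hx : x ∉ l := (List.nodup_cons.mp hl).1
    have hl' : l.Nodup := (List.nodup_cons.mp hl).2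
    rw [List.map_cons, List.prod_cons, Module.End.mul_apply, ih hl', stepAt_famKron]
    apply congrArg famKron
    funext y
    by_cases hy : y = x
    · subst hy
      rw [Function.update_self, if_pos List.mem_cons_self, if_neg hx]
    · rw [Function.update_of_ne hy]
      by_cases hyl : y ∈ l
      · rw [if_pos hyl, if_pos (List.mem_cons_of_mem x hyl)]
      · rw [if_neg hyl, if_neg (fun hc => by
          rcases List.mem_cons.mp hc with h | h
          · exact hy h
          · exact hyl h)]

lemma stepList_mem_span (W : ∀ x, Submodule ℂ (Matrix (ι x) (ι x) ℂ))
    (T : Matrix (∀ y, ι y) (∀ y, ι y) ℂ) :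
    (((Finset.univ.toList (α := X)).map (stepAt W)).prod) T
      ∈ Submodule.span ℂ (kronSet (fun x => (W x : Set (Matrix (ι x) (ι x) ℂ)))) := by
  have hsb : ∀ (a b : ∀ x, ι x) (c : ℂ),
      Matrix.single a b c = c • Matrix.single a b (1:ℂ) := by
    intro a b c
    ext e f
    rw [Matrix.smul_apply, smul_eq_mul]
    simp only [Matrix.single, Matrix.of_apply]
    by_cases h : a = e ∧ b = f
    · rw [if_pos h, if_pos h, mul_one]
    · rw [if_neg h, if_neg h, mul_zero]
  have hT : T = ∑ a : ∀ x, ι x, ∑ b : ∀ x, ι x,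
      T a b • Matrix.single a b (1:ℂ) := by
    conv_lhs => rw [Matrix.matrix_eq_sum_single T]
    exact Finset.sum_congr rfl fun a _ => Finset.sum_congr rfl fun b _ => hsb a b (T a b)
  rw [hT, map_sum]
  refine Submodule.sum_mem _ fun a _ => ?_
  rw [map_sum]
  refine Submodule.sum_mem _ fun b _ => ?_
  rw [_root_.map_smul]
  refine Submodule.smul_mem _ _ ?_
  rw [← famKron_stdBasisMatrix, stepList_famKron W _ (Finset.nodup_toList _)]
  refine Submodule.subset_span ⟨_, fun x => ?_, rfl⟩
  rw [if_pos (Finset.mem_toList.mpr (Finset.mem_univ x))]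
  exact projOf_mem W x _

/-- **Span equals block characterization.** -/
theorem span_kronSet_eq_blockMod (W : ∀ x, Submodule ℂ (Matrix (ι x) (ι x) ℂ)) :
    Submodule.span ℂ (kronSet (fun x => (W x : Set (Matrix (ι x) (ι x) ℂ)))) = blockMod W := by
  apply le_antisymm
  · rw [Submodule.span_le]
    exact kronSet_subset_blockMod W
  · intro T hT
    have := stepList_fix W (Finset.univ.toList (α := X)) hT
    rw [← this]
    exact stepList_mem_span W T

end Kron3

section Kron4

set_option linter.unusedSectionVars false

/-- The centralizer of a set, as a submodule. -/
def centSub {A : Type*} [Ring A] [Algebra ℂ A] (S : Set A) : Submodule ℂ A where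
  carrier := Set.centralizer S
  add_mem' := fun ha hb => by
    intro m hm
    rw [mul_add, add_mul, ha m hm, hb m hm]
  zero_mem' := by intro m hm; rw [mul_zero, zero_mul]
  smul_mem' := fun c z hz => by
    intro m hm
    rw [mul_smul_comm, smul_mul_assoc, hz m hm]

@[simp] lemma centSub_coe {A : Type*} [Ring A] [Algebra ℂ A] (S : Set A) :
    (centSub S : Set A) = Set.centralizer S := rfl

variable {X : Type*} [Fintype X] [DecidableEq X]
  {ι : X → Type*} [∀ x, Fintype (ι x)] [∀ x, DecidableEq (ι x)]

lemma famKron_mem_of_onlyAt_mem (N : Set (Matrix (∀ x, ι x) (∀ x, ι x) ℂ))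
    (h1 : (1 : Matrix (∀ x, ι x) (∀ x, ι x) ℂ) ∈ N)
    (hmul : ∀ u ∈ N, ∀ v ∈ N, u * v ∈ N)
    (A : ∀ x, Matrix (ι x) (ι x) ℂ) (hA : ∀ x, onlyAt x (A x) ∈ N) :
    famKron A ∈ N := by
  have key : ∀ s : Finset X,
      famKron (fun y => if y ∈ s then A y else (1 : Matrix (ι y) (ι y) ℂ)) ∈ N := by
    intro s
    induction s using Finset.induction_on with
    | empty =>
      have heq : famKron (fun y => if y ∈ (∅ : Finset X) then A y
          else (1 : Matrix (ι y) (ι y) ℂ)) = 1 := by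
        rw [show (fun y => if y ∈ (∅ : Finset X) then A y else (1 : Matrix (ι y) (ι y) ℂ))
          = fun y => (1 : Matrix (ι y) (ι y) ℂ) from funext fun y => if_neg (by simp)]
        exact famKron_one
      rw [heq]; exact h1
    | insert x s hx ih =>
      have hsplit : famKron (fun y => if y ∈ insert x s then A y
          else (1 : Matrix (ι y) (ι y) ℂ))
          = onlyAt x (A x) * famKron (fun y => if y ∈ s then A y
              else (1 : Matrix (ι y) (ι y) ℂ)) := by
        rw [onlyAt, famKron_mul]
        apply congrArg famKron
        funext y
        by_cases hy : y = x
        · subst hy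
          rw [Function.update_self, if_pos (Finset.mem_insert_self y s), if_neg hx, mul_one]
        · rw [Function.update_of_ne hy, one_mul]
          by_cases hys : y ∈ s
          · rw [if_pos hys, if_pos (Finset.mem_insert_of_mem hys)]
          · rw [if_neg hys, if_neg (fun hc => by
              rcases Finset.mem_insert.mp hc with h | h
              · exact hy h
              · exact hys h)]
      rw [hsplit]
      exact hmul _ (hA x) _ ih
  have h := key Finset.univ
  have heq : (fun y => if y ∈ (Finset.univ : Finset X) then A y
      else (1 : Matrix (ι y) (ι y) ℂ)) = A :=
    funext fun y => if_pos (Finset.mem_univ y)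
  rwa [heq] at h

lemma onlyAt_mul (x : X) (O O' : Matrix (ι x) (ι x) ℂ) :
    onlyAt x O * onlyAt x O' = onlyAt x (O * O') := by
  rw [onlyAt, onlyAt, onlyAt, famKron_mul]
  apply congrArg famKron
  funext y
  by_cases hy : y = x
  · subst hy; rw [Function.update_self, Function.update_self, Function.update_self]
  · rw [Function.update_of_ne hy, Function.update_of_ne hy, Function.update_of_ne hy, one_mul]

lemma onlyAt_one (x : X) : onlyAt x (1 : Matrix (ι x) (ι x) ℂ) = 1 := by
  rw [onlyAt, Function.update_eq_self]
  exact famKron_one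

lemma onlyAt_conjTranspose (x : X) (O : Matrix (ι x) (ι x) ℂ) :
    (onlyAt x O)ᴴ = onlyAt x Oᴴ := by
  rw [onlyAt, onlyAt, famKron_conjTranspose]
  apply congrArg famKron
  funext y
  by_cases hy : y = x
  · subst hy; rw [Function.update_self, Function.update_self]
  · rw [Function.update_of_ne hy, Function.update_of_ne hy, Matrix.conjTranspose_one]

lemma onlyAt_add (x : X) (O O' : Matrix (ι x) (ι x) ℂ) :
    onlyAt x (O + O') = onlyAt x O + onlyAt x O' := by
  ext c d
  rw [Matrix.add_apply, onlyAt_apply, onlyAt_apply, onlyAt_apply, Matrix.add_apply, add_mul]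

lemma onlyAt_smul (x : X) (c : ℂ) (O : Matrix (ι x) (ι x) ℂ) :
    onlyAt x (c • O) = c • onlyAt x O := by
  ext e d
  rw [Matrix.smul_apply, onlyAt_apply, onlyAt_apply, Matrix.smul_apply, smul_eq_mul,
    smul_eq_mul, mul_assoc]

/-- **Commutant of a tensor product.** -/
theorem centralizer_kronSet (W : ∀ x, Submodule ℂ (Matrix (ι x) (ι x) ℂ))
    (h1 : ∀ x, (1 : Matrix (ι x) (ι x) ℂ) ∈ W x) :
    Set.centralizer (kronSet (fun x => (W x : Set (Matrix (ι x) (ι x) ℂ))))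
      = (Submodule.span ℂ (kronSet (fun x =>
          Set.centralizer (W x : Set (Matrix (ι x) (ι x) ℂ)))) :
            Set (Matrix (∀ x, ι x) (∀ x, ι x) ℂ)) := by
  have hblock : Submodule.span ℂ (kronSet (fun x =>
      Set.centralizer (W x : Set (Matrix (ι x) (ι x) ℂ))))
        = blockMod (fun x => centSub (W x : Set (Matrix (ι x) (ι x) ℂ))) := by
    have h := span_kronSet_eq_blockMod (fun x => centSub (W x : Set (Matrix (ι x) (ι x) ℂ)))
    simpa using h
  apply Set.Subset.antisymm
  · intro T hT
    rw [SetLike.mem_coe, hblock]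
    intro x a b
    show blockAt x T a b ∈ Set.centralizer (W x : Set (Matrix (ι x) (ι x) ℂ))
    intro O hO
    have hcomm := hT _ (onlyAt_mem_kronSet h1 hO)
    exact ((commute_onlyAt_iff x O T).mp hcomm.symm a b).symm
  · intro T hT
    rw [SetLike.mem_coe, hblock] at hT
    intro M hM
    obtain ⟨A, hA, rfl⟩ := hM
    have hTspan : T ∈ Submodule.span ℂ (kronSet (fun x =>
        Set.centralizer (W x : Set (Matrix (ι x) (ι x) ℂ)))) := by
      rw [hblock]; exact hT
    clear hT
    induction hTspan using Submodule.span_induction with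
    | mem z hz =>
      obtain ⟨C, hC, rfl⟩ := hz
      rw [famKron_mul, famKron_mul]
      apply congrArg famKron
      funext x
      exact hC x (A x) (hA x)
    | zero => rw [mul_zero, zero_mul]
    | add u v _ _ hu hv => rw [mul_add, add_mul, hu, hv]
    | smul c u _ hu => rw [mul_smul_comm, smul_mul_assoc, hu]

end Kron4

section Kron5

set_option linter.unusedSectionVars false

lemma centralizer_univ_eq_scalars {m : Type*} [Fintype m] [DecidableEq m] :
    Set.centralizer (Set.univ : Set (Matrix m m ℂ)) = scalars m := by
  have hscal : ∀ c : ℂ, Matrix.scalar m c = c • (1 : Matrix m m ℂ) := by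
    intro c
    ext i j
    simp [Matrix.scalar_apply, Matrix.one_apply, Matrix.diagonal, Matrix.smul_apply,
      mul_ite, Matrix.of_apply]
  ext M
  constructor
  · intro hM
    have hrange : M ∈ Set.range (Matrix.scalar m) :=
      Matrix.mem_range_scalar_iff_commute_single'.mpr
        (fun i j => hM _ (Set.mem_univ _))
    obtain ⟨c, hc⟩ := hrange
    exact ⟨c, by show c • (1 : Matrix m m ℂ) = M; rw [← hscal]; exact hc⟩
  · rintro ⟨c, rfl⟩ N _
    show N * (c • 1) = (c • 1) * N
    rw [mul_smul_comm, smul_mul_assoc, mul_one, one_mul]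

lemma subset_scalars_of_centralizer_univ {m : Type*} [Fintype m] [DecidableEq m]
    {S : Set (Matrix m m ℂ)} (h : Set.centralizer S = Set.univ) : S ⊆ scalars m := by
  intro O hO
  rw [← centralizer_univ_eq_scalars]
  intro N _
  have hN : N ∈ Set.centralizer S := h ▸ Set.mem_univ N
  exact (hN O hO).symm

variable {X : Type*} [Fintype X] [DecidableEq X]
  {ι : X → Type*} [∀ x, Fintype (ι x)] [∀ x, DecidableEq (ι x)]

lemma span_kronSet_inter (W₁ W₂ : ∀ x, Submodule ℂ (Matrix (ι x) (ι x) ℂ)) :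
    ((Submodule.span ℂ (kronSet (fun x => (W₁ x : Set (Matrix (ι x) (ι x) ℂ)))) :
        Set (Matrix (∀ x, ι x) (∀ x, ι x) ℂ)) ∩
      (Submodule.span ℂ (kronSet (fun x => (W₂ x : Set (Matrix (ι x) (ι x) ℂ)))) : Set _))
    = (Submodule.span ℂ (kronSet (fun x => ((W₁ x ⊓ W₂ x : Submodule ℂ _) :
        Set (Matrix (ι x) (ι x) ℂ)))) : Set _) := by
  rw [span_kronSet_eq_blockMod, span_kronSet_eq_blockMod, span_kronSet_eq_blockMod]
  ext T
  constructor
  · rintro ⟨h1, h2⟩ x a b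
    exact Submodule.mem_inf.mpr ⟨h1 x a b, h2 x a b⟩
  · intro h
    exact ⟨fun x a b => (Submodule.mem_inf.mp (h x a b)).1,
      fun x a b => (Submodule.mem_inf.mp (h x a b)).2⟩

theorem tensorVNA_eq_span (W : ∀ x, Submodule ℂ (Matrix (ι x) (ι x) ℂ))
    (h1 : ∀ x, (1 : Matrix (ι x) (ι x) ℂ) ∈ W x)
    (hmul : ∀ x, ∀ a ∈ W x, ∀ b ∈ W x, a * b ∈ W x)
    (hstar : ∀ x, ∀ a ∈ W x, aᴴ ∈ W x) :
    tensorVNA (fun x => (W x : Set (Matrix (ι x) (ι x) ℂ)))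
      = (Submodule.span ℂ (kronSet (fun x => (W x : Set (Matrix (ι x) (ι x) ℂ)))) :
          Set (Matrix (∀ x, ι x) (∀ x, ι x) ℂ)) := by
  have hgen : {M | ∃ A : ∀ x, Matrix (ι x) (ι x) ℂ,
      (∀ x, A x ∈ (W x : Set (Matrix (ι x) (ι x) ℂ))) ∧ M = famKron A}
        = kronSet (fun x => (W x : Set (Matrix (ι x) (ι x) ℂ))) := rfl
  have hone : (1 : Matrix (∀ x, ι x) (∀ x, ι x) ℂ)
      ∈ kronSet (fun x => (W x : Set (Matrix (ι x) (ι x) ℂ))) :=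
    ⟨fun x => 1, fun x => h1 x, famKron_one.symm⟩
  set sp := Submodule.span ℂ (kronSet (fun x => (W x : Set (Matrix (ι x) (ι x) ℂ)))) with hsp
  have hspanmul : ∀ u ∈ sp, ∀ v ∈ sp, u * v ∈ sp := by
    intro u hu
    induction hu using Submodule.span_induction with
    | mem z hz =>
      intro v hv
      induction hv using Submodule.span_induction with
      | mem w hw =>
        obtain ⟨A, hA, rfl⟩ := hz
        obtain ⟨B, hB, rfl⟩ := hw
        rw [famKron_mul]
        exact Submodule.subset_span ⟨_, fun x => hmul x _ (hA x) _ (hB x), rfl⟩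
      | zero => rw [mul_zero]; exact sp.zero_mem
      | add w₁ w₂ _ _ hw₁ hw₂ => rw [mul_add]; exact sp.add_mem hw₁ hw₂
      | smul c w _ hw => rw [mul_smul_comm]; exact sp.smul_mem c hw
    | zero => intro v hv; rw [zero_mul]; exact sp.zero_mem
    | add u₁ u₂ _ _ hu₁ hu₂ => intro v hv; rw [add_mul]; exact sp.add_mem (hu₁ v hv) (hu₂ v hv)
    | smul c u _ hu => intro v hv; rw [smul_mul_assoc]; exact sp.smul_mem c (hu v hv)
  have hspanstar : ∀ u ∈ sp, star u ∈ sp := by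
    intro u hu
    induction hu using Submodule.span_induction with
    | mem z hz =>
      obtain ⟨A, hA, rfl⟩ := hz
      rw [Matrix.star_eq_conjTranspose, famKron_conjTranspose]
      exact Submodule.subset_span ⟨_, fun x => hstar x _ (hA x), rfl⟩
    | zero => rw [star_zero]; exact sp.zero_mem
    | add u₁ u₂ _ _ h₁ h₂ => rw [star_add]; exact sp.add_mem h₁ h₂
    | smul c u _ h => rw [star_smul]; exact sp.smul_mem _ h
  apply Set.Subset.antisymm
  · intro z hz
    rw [tensorVNA, SetLike.mem_coe] at hz
    rw [SetLike.mem_coe]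
    induction hz using StarAlgebra.adjoin_induction with
    | mem w hw => exact Submodule.subset_span hw
    | algebraMap r =>
      rw [Algebra.algebraMap_eq_smul_one]
      exact sp.smul_mem r (Submodule.subset_span hone)
    | add u v _ _ hu hv => exact sp.add_mem hu hv
    | mul u v hu' hv' hu hv => exact hspanmul u hu v hv
    | star u _ hu => exact hspanstar u hu
  · intro z hz
    rw [SetLike.mem_coe] at hz
    rw [tensorVNA, SetLike.mem_coe]
    induction hz using Submodule.span_induction with
    | mem w hw => exact StarAlgebra.subset_adjoin ℂ _ hw
    | zero => exact zero_mem _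
    | add u v _ _ hu hv => exact add_mem hu hv
    | smul c u _ hu => exact SMulMemClass.smul_mem c hu

end Kron5

section Glue

set_option linter.unusedSectionVars false

variable {X ιA ιB : Type*} [Fintype X] [DecidableEq X]
  {ι : X → Type*} [∀ x, Fintype (ι x)] [∀ x, DecidableEq (ι x)]
  [Fintype ιA] [Fintype ιB] [DecidableEq ιA] [DecidableEq ιB]

lemma one_kron_conjTranspose {m n : Type*} [Fintype m] [DecidableEq m] [Fintype n]
    [DecidableEq n] (a : Matrix n n ℂ) :
    ((1 : Matrix m m ℂ) ⊗ₖ a)ᴴ = (1 : Matrix m m ℂ) ⊗ₖ aᴴ := by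
  ext ⟨i,k⟩ ⟨j,l⟩
  simp only [conjTranspose_apply, kroneckerMap_apply, one_apply, star_mul']
  by_cases h : j = i
  · subst h; simp [mul_comm]
  · rw [if_neg h, if_neg fun hh => h hh.symm]
    simp

variable (R : Matrix (ιA × ιB) (∀ x, ι x) ℂ)

lemma sandwich (hR : Rᴴ * R = 1) (B : Matrix (ιA × ιB) (ιA × ιB) ℂ) :
    Rᴴ * ((R * Rᴴ) * B * (R * Rᴴ)) * R = Rᴴ * B * R := by
  simp only [Matrix.mul_assoc]
  rw [hR, Matrix.mul_one, ← Matrix.mul_assoc Rᴴ R, hR, Matrix.one_mul]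

lemma projPP (hR : Rᴴ * R = 1) : (R * Rᴴ) * (R * Rᴴ) = R * Rᴴ := by
  rw [Matrix.mul_assoc R Rᴴ, ← Matrix.mul_assoc Rᴴ R, hR, Matrix.one_mul]

lemma pbmul (hR : Rᴴ * R = 1) {K K' : Matrix (ιA × ιB) (ιA × ιB) ℂ}
    (hK : Commute K (R * Rᴴ)) :
    (Rᴴ * K * R) * (Rᴴ * K' * R) = Rᴴ * (K * K') * R := by
  have hK' : K * (R * Rᴴ) = (R * Rᴴ) * K := hK
  calc (Rᴴ * K * R) * (Rᴴ * K' * R)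
      = Rᴴ * (K * (R * Rᴴ) * K') * R := by simp only [Matrix.mul_assoc]
    _ = Rᴴ * ((R * Rᴴ) * (K * K')) * R := by
        rw [hK', Matrix.mul_assoc (R * Rᴴ) K K']
    _ = Rᴴ * (K * K') * R := by
        rw [← Matrix.mul_assoc Rᴴ (R * Rᴴ), ← Matrix.mul_assoc Rᴴ R Rᴴ, hR, Matrix.one_mul]

lemma pullback_MA_iff (hR : Rᴴ * R = 1) (z : Matrix (∀ x, ι x) (∀ x, ι x) ℂ) :
    z ∈ pullback R (MA (R * Rᴴ)) ↔ ∃ O : Matrix ιA ιA ℂ,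
      Commute (O ⊗ₖ (1 : Matrix ιB ιB ℂ)) (R * Rᴴ) ∧ z = Rᴴ * (O ⊗ₖ (1 : Matrix ιB ιB ℂ)) * R := by
  constructor
  · rintro ⟨B, ⟨O, hcomm, rfl⟩, rfl⟩
    exact ⟨O, hcomm, (sandwich R hR _)⟩
  · rintro ⟨O, hcomm, rfl⟩
    exact ⟨(R * Rᴴ) * (O ⊗ₖ 1) * (R * Rᴴ), ⟨O, hcomm, rfl⟩, sandwich R hR _⟩

lemma pullback_MB_iff (hR : Rᴴ * R = 1) (z : Matrix (∀ x, ι x) (∀ x, ι x) ℂ) :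
    z ∈ pullback R (MB (R * Rᴴ)) ↔ ∃ O : Matrix ιB ιB ℂ,
      Commute ((1 : Matrix ιA ιA ℂ) ⊗ₖ O) (R * Rᴴ) ∧ z = Rᴴ * ((1 : Matrix ιA ιA ℂ) ⊗ₖ O) * R := by
  constructor
  · rintro ⟨B, ⟨O, hcomm, rfl⟩, rfl⟩
    exact ⟨O, hcomm, (sandwich R hR _)⟩
  · rintro ⟨O, hcomm, rfl⟩
    exact ⟨(R * Rᴴ) * (1 ⊗ₖ O) * (R * Rᴴ), ⟨O, hcomm, rfl⟩, sandwich R hR _⟩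

lemma pbA_zero (hR : Rᴴ * R = 1) : (0 : Matrix (∀ x, ι x) (∀ x, ι x) ℂ)
    ∈ pullback R (MA (R * Rᴴ)) := by
  rw [pullback_MA_iff R hR]
  exact ⟨0, by rw [Matrix.zero_kronecker]; exact Commute.zero_left _,
    by rw [Matrix.zero_kronecker, Matrix.mul_zero, Matrix.zero_mul]⟩

lemma pbA_one (hR : Rᴴ * R = 1) : (1 : Matrix (∀ x, ι x) (∀ x, ι x) ℂ)
    ∈ pullback R (MA (R * Rᴴ)) := by
  rw [pullback_MA_iff R hR]
  exact ⟨1, by rw [Matrix.one_kronecker_one]; exact Commute.one_left _,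
    by rw [Matrix.one_kronecker_one, Matrix.mul_one, hR]⟩

lemma pbA_add (hR : Rᴴ * R = 1) {z w : Matrix (∀ x, ι x) (∀ x, ι x) ℂ}
    (hz : z ∈ pullback R (MA (R * Rᴴ))) (hw : w ∈ pullback R (MA (R * Rᴴ))) :
    z + w ∈ pullback R (MA (R * Rᴴ)) := by
  rw [pullback_MA_iff R hR] at hz hw ⊢
  obtain ⟨O, hO, rfl⟩ := hz
  obtain ⟨O', hO', rfl⟩ := hw
  refine ⟨O + O', ?_, ?_⟩
  · rw [Matrix.add_kronecker]; exact hO.add_left hO'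
  · rw [Matrix.add_kronecker, Matrix.mul_add, Matrix.add_mul]

lemma pbA_smul (hR : Rᴴ * R = 1) (c : ℂ) {z : Matrix (∀ x, ι x) (∀ x, ι x) ℂ}
    (hz : z ∈ pullback R (MA (R * Rᴴ))) : c • z ∈ pullback R (MA (R * Rᴴ)) := by
  rw [pullback_MA_iff R hR] at hz ⊢
  obtain ⟨O, hO, rfl⟩ := hz
  refine ⟨c • O, ?_, ?_⟩
  · rw [Matrix.smul_kronecker]; exact hO.smul_left c
  · rw [Matrix.smul_kronecker, Matrix.mul_smul, Matrix.smul_mul]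

lemma pbA_mul (hR : Rᴴ * R = 1) {z w : Matrix (∀ x, ι x) (∀ x, ι x) ℂ}
    (hz : z ∈ pullback R (MA (R * Rᴴ))) (hw : w ∈ pullback R (MA (R * Rᴴ))) :
    z * w ∈ pullback R (MA (R * Rᴴ)) := by
  rw [pullback_MA_iff R hR] at hz hw ⊢
  obtain ⟨O, hO, rfl⟩ := hz
  obtain ⟨O', hO', rfl⟩ := hw
  refine ⟨O * O', ?_, ?_⟩
  · rw [show (O * O') ⊗ₖ (1 : Matrix ιB ιB ℂ) = (O ⊗ₖ 1) * (O' ⊗ₖ 1) by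
      rw [← Matrix.mul_kronecker_mul, Matrix.one_mul]]
    exact hO.mul_left hO'
  · rw [pbmul R hR hO, ← Matrix.mul_kronecker_mul, Matrix.one_mul]

lemma pbA_star (hR : Rᴴ * R = 1) {z : Matrix (∀ x, ι x) (∀ x, ι x) ℂ}
    (hz : z ∈ pullback R (MA (R * Rᴴ))) : zᴴ ∈ pullback R (MA (R * Rᴴ)) := by
  rw [pullback_MA_iff R hR] at hz ⊢
  obtain ⟨O, hO, rfl⟩ := hz
  have hPh : (R * Rᴴ)ᴴ = R * Rᴴ := by
    rw [Matrix.conjTranspose_mul, Matrix.conjTranspose_conjTranspose]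
  refine ⟨Oᴴ, ?_, ?_⟩
  · rw [← kron_one_conjTranspose]
    have h2 := hO.star_star
    rw [Matrix.star_eq_conjTranspose, Matrix.star_eq_conjTranspose, hPh] at h2
    exact h2
  · rw [Matrix.conjTranspose_mul, Matrix.conjTranspose_mul,
      Matrix.conjTranspose_conjTranspose, kron_one_conjTranspose, Matrix.mul_assoc]

lemma pbB_zero (hR : Rᴴ * R = 1) : (0 : Matrix (∀ x, ι x) (∀ x, ι x) ℂ)
    ∈ pullback R (MB (R * Rᴴ)) := by
  rw [pullback_MB_iff R hR]
  exact ⟨0, by rw [Matrix.kronecker_zero]; exact Commute.zero_left _,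
    by rw [Matrix.kronecker_zero, Matrix.mul_zero, Matrix.zero_mul]⟩

lemma pbB_one (hR : Rᴴ * R = 1) : (1 : Matrix (∀ x, ι x) (∀ x, ι x) ℂ)
    ∈ pullback R (MB (R * Rᴴ)) := by
  rw [pullback_MB_iff R hR]
  exact ⟨1, by rw [Matrix.one_kronecker_one]; exact Commute.one_left _,
    by rw [Matrix.one_kronecker_one, Matrix.mul_one, hR]⟩

lemma pbB_add (hR : Rᴴ * R = 1) {z w : Matrix (∀ x, ι x) (∀ x, ι x) ℂ}
    (hz : z ∈ pullback R (MB (R * Rᴴ))) (hw : w ∈ pullback R (MB (R * Rᴴ))) :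
    z + w ∈ pullback R (MB (R * Rᴴ)) := by
  rw [pullback_MB_iff R hR] at hz hw ⊢
  obtain ⟨O, hO, rfl⟩ := hz
  obtain ⟨O', hO', rfl⟩ := hw
  refine ⟨O + O', ?_, ?_⟩
  · rw [Matrix.kronecker_add]; exact hO.add_left hO'
  · rw [Matrix.kronecker_add, Matrix.mul_add, Matrix.add_mul]

lemma pbB_smul (hR : Rᴴ * R = 1) (c : ℂ) {z : Matrix (∀ x, ι x) (∀ x, ι x) ℂ}
    (hz : z ∈ pullback R (MB (R * Rᴴ))) : c • z ∈ pullback R (MB (R * Rᴴ)) := by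
  rw [pullback_MB_iff R hR] at hz ⊢
  obtain ⟨O, hO, rfl⟩ := hz
  refine ⟨c • O, ?_, ?_⟩
  · rw [Matrix.kronecker_smul]; exact hO.smul_left c
  · rw [Matrix.kronecker_smul, Matrix.mul_smul, Matrix.smul_mul]

lemma pbB_mul (hR : Rᴴ * R = 1) {z w : Matrix (∀ x, ι x) (∀ x, ι x) ℂ}
    (hz : z ∈ pullback R (MB (R * Rᴴ))) (hw : w ∈ pullback R (MB (R * Rᴴ))) :
    z * w ∈ pullback R (MB (R * Rᴴ)) := by
  rw [pullback_MB_iff R hR] at hz hw ⊢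
  obtain ⟨O, hO, rfl⟩ := hz
  obtain ⟨O', hO', rfl⟩ := hw
  refine ⟨O * O', ?_, ?_⟩
  · rw [show (1 : Matrix ιA ιA ℂ) ⊗ₖ (O * O') = (1 ⊗ₖ O) * ((1 : Matrix ιA ιA ℂ) ⊗ₖ O') by
      rw [← Matrix.mul_kronecker_mul, Matrix.one_mul]]
    exact hO.mul_left hO'
  · rw [pbmul R hR hO, ← Matrix.mul_kronecker_mul, Matrix.one_mul]

lemma pbB_star (hR : Rᴴ * R = 1) {z : Matrix (∀ x, ι x) (∀ x, ι x) ℂ}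
    (hz : z ∈ pullback R (MB (R * Rᴴ))) : zᴴ ∈ pullback R (MB (R * Rᴴ)) := by
  rw [pullback_MB_iff R hR] at hz ⊢
  obtain ⟨O, hO, rfl⟩ := hz
  have hPh : (R * Rᴴ)ᴴ = R * Rᴴ := by
    rw [Matrix.conjTranspose_mul, Matrix.conjTranspose_conjTranspose]
  refine ⟨Oᴴ, ?_, ?_⟩
  · rw [← one_kron_conjTranspose]
    have h2 := hO.star_star
    rw [Matrix.star_eq_conjTranspose, Matrix.star_eq_conjTranspose, hPh] at h2
    exact h2
  · rw [Matrix.conjTranspose_mul, Matrix.conjTranspose_mul,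
      Matrix.conjTranspose_conjTranspose, one_kron_conjTranspose, Matrix.mul_assoc]

/-- elements of the two pullbacks commute, given complementary recovery -/
lemma pb_commute (hR : Rᴴ * R = 1)
    (hcomp : cornerCommutant (R * Rᴴ) (MA (R * Rᴴ)) = MB (R * Rᴴ))
    {zA zB : Matrix (∀ x, ι x) (∀ x, ι x) ℂ}
    (hA : zA ∈ pullback R (MA (R * Rᴴ))) (hB : zB ∈ pullback R (MB (R * Rᴴ))) :
    zA * zB = zB * zA := by
  obtain ⟨B, hBmem, rfl⟩ := hA
  obtain ⟨C, hCmem, rfl⟩ := hB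
  have hPP := projPP R hR
  have hBP : Commute B (R * Rᴴ) := by
    obtain ⟨O, hO, rfl⟩ := hBmem
    show ((R*Rᴴ) * (O ⊗ₖ 1) * (R*Rᴴ)) * (R*Rᴴ) = (R*Rᴴ) * ((R*Rᴴ) * (O ⊗ₖ 1) * (R*Rᴴ))
    rw [Matrix.mul_assoc ((R*Rᴴ) * (O ⊗ₖ 1)), hPP,
      ← Matrix.mul_assoc (R*Rᴴ) ((R*Rᴴ) * (O ⊗ₖ 1)) (R*Rᴴ),
      ← Matrix.mul_assoc (R*Rᴴ) (R*Rᴴ) (O ⊗ₖ 1), hPP]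
  have hCP : Commute C (R * Rᴴ) := by
    obtain ⟨O, hO, rfl⟩ := hCmem
    show ((R*Rᴴ) * (1 ⊗ₖ O) * (R*Rᴴ)) * (R*Rᴴ) = (R*Rᴴ) * ((R*Rᴴ) * (1 ⊗ₖ O) * (R*Rᴴ))
    rw [Matrix.mul_assoc ((R*Rᴴ) * (1 ⊗ₖ O)), hPP,
      ← Matrix.mul_assoc (R*Rᴴ) ((R*Rᴴ) * (1 ⊗ₖ O)) (R*Rᴴ),
      ← Matrix.mul_assoc (R*Rᴴ) (R*Rᴴ) (1 ⊗ₖ O), hPP]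
  have hBC : B * C = C * B := by
    have hCcc : C ∈ cornerCommutant (R * Rᴴ) (MA (R * Rᴴ)) := by rw [hcomp]; exact hCmem
    exact hCcc.2 B hBmem
  show (Rᴴ * B * R) * (Rᴴ * C * R) = (Rᴴ * C * R) * (Rᴴ * B * R)
  rw [pbmul R hR hBP, pbmul R hR hCP, hBC]

end Glue

section Glue2

set_option linter.unusedSectionVars false

variable {X ιA ιB : Type*} [Fintype X] [DecidableEq X]
  {ι : X → Type*} [∀ x, Fintype (ι x)] [∀ x, DecidableEq (ι x)]
  [Fintype ιA] [Fintype ιB] [DecidableEq ιA] [DecidableEq ιB]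

lemma onlyAt_zero (x : X) : onlyAt x (0 : Matrix (ι x) (ι x) ℂ)
    = (0 : Matrix (∀ y, ι y) (∀ y, ι y) ℂ) := by
  ext c d
  rw [onlyAt_apply]
  show (0 : Matrix (ι x) (ι x) ℂ) (c x) (d x) * _ = 0
  rw [Matrix.zero_apply, zero_mul]

variable (R : Matrix (ιA × ιB) (∀ x, ι x) ℂ)

lemma unsandwich (hR : Rᴴ * R = 1) (M : Matrix (∀ x, ι x) (∀ x, ι x) ℂ) :
    Rᴴ * (R * M * Rᴴ) * R = M := by
  rw [← Matrix.mul_assoc Rᴴ (R * M) Rᴴ, ← Matrix.mul_assoc Rᴴ R M, hR, Matrix.one_mul,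
    Matrix.mul_assoc M Rᴴ R, hR, Matrix.mul_one]

lemma resandwich (B : Matrix (ιA × ιB) (ιA × ιB) ℂ) :
    R * (Rᴴ * B * R) * Rᴴ = (R * Rᴴ) * B * (R * Rᴴ) := by
  simp only [Matrix.mul_assoc]

lemma MA_sandwich (hR : Rᴴ * R = 1) {B : Matrix (ιA × ιB) (ιA × ιB) ℂ}
    (hB : B ∈ MA (R * Rᴴ)) : (R * Rᴴ) * B * (R * Rᴴ) = B := by
  obtain ⟨O, hO, rfl⟩ := hB
  have hPP := projPP R hR
  set P := R * Rᴴ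
  set K := O ⊗ₖ (1 : Matrix ιB ιB ℂ)
  calc P * (P * K * P) * P
      = ((P * (P * K)) * P) * P := by rw [← Matrix.mul_assoc P (P * K) P]
    _ = (((P * P) * K) * P) * P := by rw [← Matrix.mul_assoc P P K]
    _ = ((P * K) * P) * P := by rw [hPP]
    _ = (P * K) * (P * P) := by rw [Matrix.mul_assoc (P * K) P P]
    _ = P * K * P := by rw [hPP]

lemma MB_sandwich (hR : Rᴴ * R = 1) {B : Matrix (ιA × ιB) (ιA × ιB) ℂ}
    (hB : B ∈ MB (R * Rᴴ)) : (R * Rᴴ) * B * (R * Rᴴ) = B := by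
  obtain ⟨O, hO, rfl⟩ := hB
  have hPP := projPP R hR
  set P := R * Rᴴ
  set K := (1 : Matrix ιA ιA ℂ) ⊗ₖ O
  calc P * (P * K * P) * P
      = ((P * (P * K)) * P) * P := by rw [← Matrix.mul_assoc P (P * K) P]
    _ = (((P * P) * K) * P) * P := by rw [← Matrix.mul_assoc P P K]
    _ = ((P * K) * P) * P := by rw [hPP]
    _ = (P * K) * (P * P) := by rw [Matrix.mul_assoc (P * K) P P]
    _ = P * K * P := by rw [hPP]

lemma mlocA_iff (hR : Rᴴ * R = 1) (x : X) (O : Matrix (ι x) (ι x) ℂ) :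
    O ∈ MlocA R x ↔ onlyAt x O ∈ pullback R (MA (R * Rᴴ)) := by
  constructor
  · intro hO
    exact ⟨R * onlyAt x O * Rᴴ, hO, unsandwich R hR _⟩
  · rintro ⟨B, hB, heq⟩
    show R * onlyAt x O * Rᴴ ∈ MA (R * Rᴴ)
    have heq' : onlyAt x O = Rᴴ * B * R := heq.symm
    rw [heq', resandwich, MA_sandwich R hR hB]
    exact hB

lemma mlocB_iff (hR : Rᴴ * R = 1) (x : X) (O : Matrix (ι x) (ι x) ℂ) :
    O ∈ MlocB R x ↔ onlyAt x O ∈ pullback R (MB (R * Rᴴ)) := by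
  constructor
  · intro hO
    exact ⟨R * onlyAt x O * Rᴴ, hO, unsandwich R hR _⟩
  · rintro ⟨B, hB, heq⟩
    show R * onlyAt x O * Rᴴ ∈ MB (R * Rᴴ)
    have heq' : onlyAt x O = Rᴴ * B * R := heq.symm
    rw [heq', resandwich, MB_sandwich R hR hB]
    exact hB

/-- `M_a(x)` as a submodule. -/
def aSub (hR : Rᴴ * R = 1) (x : X) : Submodule ℂ (Matrix (ι x) (ι x) ℂ) where
  carrier := MlocA R x
  add_mem' := fun {o o'} ho ho' => by
    rw [mlocA_iff R hR] at ho ho' ⊢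
    rw [onlyAt_add]
    exact pbA_add R hR ho ho'
  zero_mem' := by
    rw [mlocA_iff R hR, onlyAt_zero]
    exact pbA_zero R hR
  smul_mem' := fun c o ho => by
    rw [mlocA_iff R hR] at ho ⊢
    rw [onlyAt_smul]
    exact pbA_smul R hR c ho

@[simp] lemma aSub_coe (hR : Rᴴ * R = 1) (x : X) :
    (aSub R hR x : Set (Matrix (ι x) (ι x) ℂ)) = MlocA R x := rfl

/-- `M_ā(x)` as a submodule. -/
def bSub (hR : Rᴴ * R = 1) (x : X) : Submodule ℂ (Matrix (ι x) (ι x) ℂ) where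
  carrier := MlocB R x
  add_mem' := fun {o o'} ho ho' => by
    rw [mlocB_iff R hR] at ho ho' ⊢
    rw [onlyAt_add]
    exact pbB_add R hR ho ho'
  zero_mem' := by
    rw [mlocB_iff R hR, onlyAt_zero]
    exact pbB_zero R hR
  smul_mem' := fun c o ho => by
    rw [mlocB_iff R hR] at ho ⊢
    rw [onlyAt_smul]
    exact pbB_smul R hR c ho

@[simp] lemma bSub_coe (hR : Rᴴ * R = 1) (x : X) :
    (bSub R hR x : Set (Matrix (ι x) (ι x) ℂ)) = MlocB R x := rfl

lemma a_one (hR : Rᴴ * R = 1) (x : X) : (1 : Matrix (ι x) (ι x) ℂ) ∈ aSub R hR x := by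
  show (1 : Matrix (ι x) (ι x) ℂ) ∈ MlocA R x
  rw [mlocA_iff R hR, onlyAt_one]
  exact pbA_one R hR

lemma a_mul (hR : Rᴴ * R = 1) (x : X) :
    ∀ o ∈ aSub R hR x, ∀ o' ∈ aSub R hR x, o * o' ∈ aSub R hR x := by
  intro o ho o' ho'
  show o * o' ∈ MlocA R x
  rw [mlocA_iff R hR, ← onlyAt_mul]
  exact pbA_mul R hR ((mlocA_iff R hR x o).mp ho) ((mlocA_iff R hR x o').mp ho')

lemma a_star (hR : Rᴴ * R = 1) (x : X) :
    ∀ o ∈ aSub R hR x, oᴴ ∈ aSub R hR x := by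
  intro o ho
  show oᴴ ∈ MlocA R x
  rw [mlocA_iff R hR, ← onlyAt_conjTranspose]
  exact pbA_star R hR ((mlocA_iff R hR x o).mp ho)

lemma b_one (hR : Rᴴ * R = 1) (x : X) : (1 : Matrix (ι x) (ι x) ℂ) ∈ bSub R hR x := by
  show (1 : Matrix (ι x) (ι x) ℂ) ∈ MlocB R x
  rw [mlocB_iff R hR, onlyAt_one]
  exact pbB_one R hR

lemma b_mul (hR : Rᴴ * R = 1) (x : X) :
    ∀ o ∈ bSub R hR x, ∀ o' ∈ bSub R hR x, o * o' ∈ bSub R hR x := by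
  intro o ho o' ho'
  show o * o' ∈ MlocB R x
  rw [mlocB_iff R hR, ← onlyAt_mul]
  exact pbB_mul R hR ((mlocB_iff R hR x o).mp ho) ((mlocB_iff R hR x o').mp ho')

lemma b_star (hR : Rᴴ * R = 1) (x : X) :
    ∀ o ∈ bSub R hR x, oᴴ ∈ bSub R hR x := by
  intro o ho
  show oᴴ ∈ MlocB R x
  rw [mlocB_iff R hR, ← onlyAt_conjTranspose]
  exact pbB_star R hR ((mlocB_iff R hR x o).mp ho)

end Glue2

end SubregionAux

/-- Suppose `R : E → H` is an isometry (`P_code = RR⁺`), complementary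
recovery holds (`M_A' = M_Ā` within `L(H_code)`) and bulk local complementarity holds
(`M_ā(x) = M_a(x)'` inside `L(e_x)` for every bulk qudit `x`).  With the bulk partitioned
into `W[A] = {x : M_a(x) = L(e_x)}`, `W[Ā] = {x : M_ā(x) = L(e_x)}` and the entangling
surface `E[AĀ]` (the remainder), we have
`R⁺ M_A R = (⊗_{x∈W[A]} L(e_x)) ⊗ (⊗_{x∈E[AĀ]} M_a(x))`,
`R⁺ M_Ā R = (⊗_{x∈E[AĀ]} M_ā(x)) ⊗ (⊗_{x∈W[Ā]} L(e_x))`, and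
`Z(R⁺ M_A R) = ⊗_{x∈E[AĀ]} Z(M_a(x))` (suppressed trivial factors being `ℂ·1`). -/
theorem subregion_duality_structure
    (R : Matrix (ιA × ιB) (∀ x, ι x) ℂ)
    (hR : Rᴴ * R = 1)
    (hcomplementary : cornerCommutant (R * Rᴴ) (MA (R * Rᴴ)) = MB (R * Rᴴ))
    (hbulkLocal : ∀ x, MlocB R x = Set.centralizer (MlocA R x)) :
    pullback R (MA (R * Rᴴ)) =
      tensorVNA (fun x =>
        if MlocA R x = Set.univ then Set.univ
        else if MlocB R x = Set.univ then scalars (ι x)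
        else MlocA R x) ∧
    pullback R (MB (R * Rᴴ)) =
      tensorVNA (fun x =>
        if MlocB R x = Set.univ then Set.univ
        else if MlocA R x = Set.univ then scalars (ι x)
        else MlocB R x) ∧
    pullback R (MA (R * Rᴴ)) ∩ Set.centralizer (pullback R (MA (R * Rᴴ))) =
      tensorVNA (fun x =>
        if MlocA R x ≠ Set.univ ∧ MlocB R x ≠ Set.univ then
          MlocA R x ∩ Set.centralizer (MlocA R x)
        else scalars (ι x)) := by
  open SubregionAux in
  -- auxiliary facts
  have hA_scal : ∀ x, MlocB R x = Set.univ → scalars (ι x) = MlocA R x := by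
    intro x hb
    apply Set.Subset.antisymm
    · rintro _ ⟨c, rfl⟩
      exact (SubregionAux.aSub R hR x).smul_mem c (SubregionAux.a_one R hR x)
    · apply SubregionAux.subset_scalars_of_centralizer_univ
      rw [← hbulkLocal x]
      exact hb
  have hB_scal : ∀ x, MlocA R x = Set.univ → scalars (ι x) = MlocB R x := by
    intro x ha
    rw [hbulkLocal x, ha, SubregionAux.centralizer_univ_eq_scalars]
  -- membership of elementary tensors in the pullbacks
  have hkronA_sub : ∀ M ∈ SubregionAux.kronSet
      (fun x => ((SubregionAux.aSub R hR x : Submodule ℂ _) : Set (Matrix (ι x) (ι x) ℂ))),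
      M ∈ pullback R (MA (R * Rᴴ)) := by
    rintro _ ⟨A, hA, rfl⟩
    exact SubregionAux.famKron_mem_of_onlyAt_mem _ (SubregionAux.pbA_one R hR)
      (fun u hu v hv => SubregionAux.pbA_mul R hR hu hv) A
      (fun x => (SubregionAux.mlocA_iff R hR x (A x)).mp (hA x))
  have hkronB_sub : ∀ M ∈ SubregionAux.kronSet
      (fun x => ((SubregionAux.bSub R hR x : Submodule ℂ _) : Set (Matrix (ι x) (ι x) ℂ))),
      M ∈ pullback R (MB (R * Rᴴ)) := by
    rintro _ ⟨A, hA, rfl⟩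
    exact SubregionAux.famKron_mem_of_onlyAt_mem _ (SubregionAux.pbB_one R hR)
      (fun u hu v hv => SubregionAux.pbB_mul R hR hu hv) A
      (fun x => (SubregionAux.mlocB_iff R hR x (A x)).mp (hA x))
  -- span inclusions
  have hspanA_sub : (Submodule.span ℂ (SubregionAux.kronSet
      (fun x => ((SubregionAux.aSub R hR x : Submodule ℂ _) : Set (Matrix (ι x) (ι x) ℂ)))) :
        Set (Matrix (∀ x, ι x) (∀ x, ι x) ℂ)) ⊆ pullback R (MA (R * Rᴴ)) := by
    intro z hz
    rw [SetLike.mem_coe] at hz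
    induction hz using Submodule.span_induction with
    | mem w hw => exact hkronA_sub w hw
    | zero => exact SubregionAux.pbA_zero R hR
    | add u v _ _ hu hv => exact SubregionAux.pbA_add R hR hu hv
    | smul c u _ hu => exact SubregionAux.pbA_smul R hR c hu
  have hspanB_sub : (Submodule.span ℂ (SubregionAux.kronSet
      (fun x => ((SubregionAux.bSub R hR x : Submodule ℂ _) : Set (Matrix (ι x) (ι x) ℂ)))) :
        Set (Matrix (∀ x, ι x) (∀ x, ι x) ℂ)) ⊆ pullback R (MB (R * Rᴴ)) := by
    intro z hz
    rw [SetLike.mem_coe] at hz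
    induction hz using Submodule.span_induction with
    | mem w hw => exact hkronB_sub w hw
    | zero => exact SubregionAux.pbB_zero R hR
    | add u v _ _ hu hv => exact SubregionAux.pbB_add R hR hu hv
    | smul c u _ hu => exact SubregionAux.pbB_smul R hR c hu
  -- local double commutant
  have hcent_a : ∀ x, Set.centralizer ((SubregionAux.aSub R hR x : Submodule ℂ _) :
      Set (Matrix (ι x) (ι x) ℂ)) = ((SubregionAux.bSub R hR x : Submodule ℂ _) : Set _) := by
    intro x
    rw [SubregionAux.aSub_coe, SubregionAux.bSub_coe, hbulkLocal x]
  have hcent_b : ∀ x, Set.centralizer ((SubregionAux.bSub R hR x : Submodule ℂ _) :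
      Set (Matrix (ι x) (ι x) ℂ)) = ((SubregionAux.aSub R hR x : Submodule ℂ _) : Set _) := by
    intro x
    rw [SubregionAux.bSub_coe, hbulkLocal x]
    apply Set.Subset.antisymm
    · exact SubregionAux.dct (SubregionAux.aSub R hR x) (SubregionAux.a_one R hR x)
        (SubregionAux.a_mul R hR x) (SubregionAux.a_star R hR x)
    · intro o ho m hm
      exact (hm o ho).symm
  -- key identities
  have keyA : pullback R (MA (R * Rᴴ)) = (Submodule.span ℂ (SubregionAux.kronSet
      (fun x => ((SubregionAux.aSub R hR x : Submodule ℂ _) : Set (Matrix (ι x) (ι x) ℂ)))) :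
        Set (Matrix (∀ x, ι x) (∀ x, ι x) ℂ)) := by
    apply Set.Subset.antisymm
    · intro z hz
      have hzc : z ∈ Set.centralizer (SubregionAux.kronSet
          (fun x => ((SubregionAux.bSub R hR x : Submodule ℂ _) : Set (Matrix (ι x) (ι x) ℂ)))) := by
        intro M hM
        exact (SubregionAux.pb_commute R hR hcomplementary hz (hkronB_sub M hM)).symm
      rw [SubregionAux.centralizer_kronSet (SubregionAux.bSub R hR)
        (SubregionAux.b_one R hR)] at hzc
      rwa [show (fun x => Set.centralizer ((SubregionAux.bSub R hR x : Submodule ℂ _) :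
          Set (Matrix (ι x) (ι x) ℂ)))
        = (fun x => ((SubregionAux.aSub R hR x : Submodule ℂ _) : Set (Matrix (ι x) (ι x) ℂ)))
        from funext hcent_b] at hzc
    · exact hspanA_sub
  have keyB : pullback R (MB (R * Rᴴ)) = (Submodule.span ℂ (SubregionAux.kronSet
      (fun x => ((SubregionAux.bSub R hR x : Submodule ℂ _) : Set (Matrix (ι x) (ι x) ℂ)))) :
        Set (Matrix (∀ x, ι x) (∀ x, ι x) ℂ)) := by
    apply Set.Subset.antisymm
    · intro z hz
      have hzc : z ∈ Set.centralizer (SubregionAux.kronSet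
          (fun x => ((SubregionAux.aSub R hR x : Submodule ℂ _) : Set (Matrix (ι x) (ι x) ℂ)))) := by
        intro M hM
        exact SubregionAux.pb_commute R hR hcomplementary (hkronA_sub M hM) hz
      rw [SubregionAux.centralizer_kronSet (SubregionAux.aSub R hR)
        (SubregionAux.a_one R hR)] at hzc
      rwa [show (fun x => Set.centralizer ((SubregionAux.aSub R hR x : Submodule ℂ _) :
          Set (Matrix (ι x) (ι x) ℂ)))
        = (fun x => ((SubregionAux.bSub R hR x : Submodule ℂ _) : Set (Matrix (ι x) (ι x) ℂ)))
        from funext hcent_a] at hzc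
    · exact hspanB_sub
  have keyC : Set.centralizer (pullback R (MA (R * Rᴴ)))
      = (Submodule.span ℂ (SubregionAux.kronSet
        (fun x => ((SubregionAux.bSub R hR x : Submodule ℂ _) : Set (Matrix (ι x) (ι x) ℂ)))) :
          Set (Matrix (∀ x, ι x) (∀ x, ι x) ℂ)) := by
    rw [keyA, SubregionAux.centralizer_span,
      SubregionAux.centralizer_kronSet (SubregionAux.aSub R hR) (SubregionAux.a_one R hR)]
    rw [show (fun x => Set.centralizer ((SubregionAux.aSub R hR x : Submodule ℂ _) :
        Set (Matrix (ι x) (ι x) ℂ)))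
      = (fun x => ((SubregionAux.bSub R hR x : Submodule ℂ _) : Set (Matrix (ι x) (ι x) ℂ)))
      from funext hcent_a]
  refine ⟨?_, ?_, ?_⟩
  -- Conjunct 1
  · have hfam : (fun x =>
        if MlocA R x = Set.univ then Set.univ
        else if MlocB R x = Set.univ then scalars (ι x)
        else MlocA R x)
        = fun x => ((SubregionAux.aSub R hR x : Submodule ℂ _) :
            Set (Matrix (ι x) (ι x) ℂ)) := by
      funext x
      rw [SubregionAux.aSub_coe]
      by_cases h1 : MlocA R x = Set.univ
      · rw [if_pos h1, h1]
      · rw [if_neg h1]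
        by_cases h2 : MlocB R x = Set.univ
        · rw [if_pos h2]
          exact hA_scal x h2
        · rw [if_neg h2]
    rw [hfam, SubregionAux.tensorVNA_eq_span (SubregionAux.aSub R hR)
      (SubregionAux.a_one R hR) (SubregionAux.a_mul R hR) (SubregionAux.a_star R hR)]
    exact keyA
  -- Conjunct 2
  · have hfam : (fun x =>
        if MlocB R x = Set.univ then Set.univ
        else if MlocA R x = Set.univ then scalars (ι x)
        else MlocB R x)
        = fun x => ((SubregionAux.bSub R hR x : Submodule ℂ _) :
            Set (Matrix (ι x) (ι x) ℂ)) := by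
      funext x
      rw [SubregionAux.bSub_coe]
      by_cases h1 : MlocB R x = Set.univ
      · rw [if_pos h1, h1]
      · rw [if_neg h1]
        by_cases h2 : MlocA R x = Set.univ
        · rw [if_pos h2]
          exact hB_scal x h2
        · rw [if_neg h2]
    rw [hfam, SubregionAux.tensorVNA_eq_span (SubregionAux.bSub R hR)
      (SubregionAux.b_one R hR) (SubregionAux.b_mul R hR) (SubregionAux.b_star R hR)]
    exact keyB
  -- Conjunct 3
  · have hfam : (fun x =>
        if MlocA R x ≠ Set.univ ∧ MlocB R x ≠ Set.univ then
          MlocA R x ∩ Set.centralizer (MlocA R x)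
        else scalars (ι x))
        = fun x => (((SubregionAux.aSub R hR x ⊓ SubregionAux.bSub R hR x : Submodule ℂ _)) :
            Set (Matrix (ι x) (ι x) ℂ)) := by
      funext x
      rw [Submodule.coe_inf, SubregionAux.aSub_coe, SubregionAux.bSub_coe]
      by_cases h : MlocA R x ≠ Set.univ ∧ MlocB R x ≠ Set.univ
      · rw [if_pos h, hbulkLocal x]
      · rw [if_neg h]
        rcases Decidable.not_and_iff_or_not.mp h with h1 | h1
        · rw [not_not] at h1
          rw [h1, Set.univ_inter, ← hB_scal x h1]
        · rw [not_not] at h1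
          rw [h1, Set.inter_univ, ← hA_scal x h1]
    rw [hfam, SubregionAux.tensorVNA_eq_span
      (fun x => SubregionAux.aSub R hR x ⊓ SubregionAux.bSub R hR x)
      (fun x => Submodule.mem_inf.mpr ⟨SubregionAux.a_one R hR x, SubregionAux.b_one R hR x⟩)
      (fun x o ho o' ho' => Submodule.mem_inf.mpr
        ⟨SubregionAux.a_mul R hR x o (Submodule.mem_inf.mp ho).1 o' (Submodule.mem_inf.mp ho').1,
         SubregionAux.b_mul R hR x o (Submodule.mem_inf.mp ho).2 o' (Submodule.mem_inf.mp ho').2⟩)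
      (fun x o ho => Submodule.mem_inf.mpr
        ⟨SubregionAux.a_star R hR x o (Submodule.mem_inf.mp ho).1,
         SubregionAux.b_star R hR x o (Submodule.mem_inf.mp ho).2⟩)]
    rw [keyC, keyA]
    exact SubregionAux.span_kronSet_inter (SubregionAux.aSub R hR) (SubregionAux.bSub R hR)

end
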